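/- arXiv:math/9905043 — 2 statements merged into one kernel-verified Lean document; each statement's English description precedes it below -/
import Mathlib

section
/- Let r(x) = |x| and s(x) = dist(x, ℂ^{m-n}) for a complex subspace ℂ^{m-n} ⊂ ℂ^m (n > 0), and let β, γ ∈ ℝ. Then on ℂ^m \ ℂ^{m-n}, the (Riemannian, divided by 2) Laplacian satisfies Δ(r^β s^γ) = -½ r^{β-2} s^{γ-2} [ γ(γ+2n-2) r² + β(2m-2+β+2γ) s² ]. -/
open scoped RealInnerProductSpace

/-- The Laplacian in the Kähler convention: half the (geometer's sign) Riemannian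
Laplacian on Euclidean space, i.e. `Δ f = -(1/2) ∑ᵢ ∂²f/∂xᵢ²`. -/
noncomputable def kahlerLaplacian {k : ℕ} (f : EuclideanSpace ℝ (Fin k) → ℝ)
    (x : EuclideanSpace ℝ (Fin k)) : ℝ :=
  -(1/2) * ∑ i : Fin k,
    fderiv ℝ (fun y => fderiv ℝ f y (EuclideanSpace.single i 1)) x
      (EuclideanSpace.single i 1)

open Finset

/-- distance to the coordinate subspace -/
lemma infdist_formula (m n : ℕ) (y : EuclideanSpace ℝ (Fin (2*m))) :
    Metric.infDist y {x : EuclideanSpace ℝ (Fin (2*m)) | ∀ i : Fin (2*m), 2*(m-n) ≤ (i:ℕ) → x i = 0}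
      = Real.sqrt (∑ i ∈ Finset.univ.filter (fun i : Fin (2*m) => 2*(m-n) ≤ (i:ℕ)), y i ^ 2) := by
  set K : Set (EuclideanSpace ℝ (Fin (2*m))) :=
    {x | ∀ i : Fin (2*m), 2*(m-n) ≤ (i:ℕ) → x i = 0} with hK
  have h0K : (0 : EuclideanSpace ℝ (Fin (2*m))) ∈ K := fun i _ => rfl
  set p : EuclideanSpace ℝ (Fin (2*m)) := WithLp.toLp 2 (fun i : Fin (2*m) => if 2*(m-n) ≤ (i:ℕ) then 0 else y i) with hp
  have hpK : p ∈ K := fun i hi => by simp [hp, hi]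
  have hdist : ∀ z ∈ K, dist y z
      = Real.sqrt (∑ i : Fin (2*m), (y i - z i) ^ 2) := by
    intro z hz
    rw [EuclideanSpace.dist_eq]
    congr 1
    refine Finset.sum_congr rfl fun i _ => ?_
    rw [Real.dist_eq, sq_abs]
  have key : ∀ z ∈ K, (∑ i ∈ Finset.univ.filter (fun i : Fin (2*m) => 2*(m-n) ≤ (i:ℕ)), y i ^ 2)
      ≤ ∑ i : Fin (2*m), (y i - z i) ^ 2 := by
    intro z hz
    calc (∑ i ∈ Finset.univ.filter (fun i : Fin (2*m) => 2*(m-n) ≤ (i:ℕ)), y i ^ 2)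
        = ∑ i ∈ Finset.univ.filter (fun i : Fin (2*m) => 2*(m-n) ≤ (i:ℕ)), (y i - z i) ^ 2 := by
          refine Finset.sum_congr rfl fun i hi => ?_
          rw [hz i (by simpa using hi), sub_zero]
      _ ≤ ∑ i : Fin (2*m), (y i - z i) ^ 2 :=
          Finset.sum_le_sum_of_subset_of_nonneg (Finset.filter_subset _ _)
            (fun i _ _ => sq_nonneg _)
  refine le_antisymm ?_ ?_
  · have := Metric.infDist_le_dist_of_mem (x := y) hpK
    refine this.trans_eq ?_
    rw [hdist p hpK]
    congr 1
    rw [← Finset.sum_filter_add_sum_filter_not Finset.univ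
      (fun i : Fin (2*m) => 2*(m-n) ≤ (i:ℕ)) (fun i => (y i - p i)^2)]
    have h1 : ∑ i ∈ Finset.univ.filter (fun i : Fin (2*m) => ¬ 2*(m-n) ≤ (i:ℕ)),
        (y i - p i) ^ 2 = 0 := by
      refine Finset.sum_eq_zero fun i hi => ?_
      have : ¬ 2*(m-n) ≤ (i:ℕ) := by simpa using hi
      simp [hp, this]
    rw [h1, add_zero]
    refine Finset.sum_congr rfl fun i hi => ?_
    have : 2*(m-n) ≤ (i:ℕ) := by simpa using hi
    simp [hp, this]
  · rw [Metric.infDist_eq_iInf]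
    have : Nonempty K := ⟨⟨0, h0K⟩⟩
    refine le_ciInf fun z => ?_
    rw [hdist z z.2]
    exact Real.sqrt_le_sqrt (key z z.2)

/-- derivative of a partial sum of squares of coordinates -/
noncomputable def qd {k : ℕ} (A : Finset (Fin k)) (y : EuclideanSpace ℝ (Fin k)) :
    EuclideanSpace ℝ (Fin k) →L[ℝ] ℝ :=
  ∑ j ∈ A, (2 * y j) • EuclideanSpace.proj (𝕜 := ℝ) j

lemma hasFDeriv_qf {k : ℕ} (A : Finset (Fin k)) (y : EuclideanSpace ℝ (Fin k)) :
    HasFDerivAt (fun z : EuclideanSpace ℝ (Fin k) => ∑ j ∈ A, z j ^ 2) (qd A y) y := by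
  refine HasFDerivAt.fun_sum fun j _ => ?_
  have h1 : HasFDerivAt (fun z : EuclideanSpace ℝ (Fin k) => z j)
      (EuclideanSpace.proj (𝕜 := ℝ) j) y := (EuclideanSpace.proj (𝕜 := ℝ) j).hasFDerivAt
  have h2 := h1.mul h1
  have h3 : (fun z : EuclideanSpace ℝ (Fin k) => z j ^ 2)
      = fun z : EuclideanSpace ℝ (Fin k) => z j * z j := by funext z; ring
  rw [h3]
  rw [two_mul, add_smul]
  exact h2

lemma qd_apply {k : ℕ} (A : Finset (Fin k)) (y : EuclideanSpace ℝ (Fin k)) (i : Fin k) :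
    qd A y (EuclideanSpace.single i 1) = (if i ∈ A then (1:ℝ) else 0) * (2 * y i) := by
  simp only [qd, ContinuousLinearMap.sum_apply, ContinuousLinearMap.smul_apply]
  have : ∀ j, (EuclideanSpace.proj (𝕜 := ℝ) j) (EuclideanSpace.single i (1:ℝ))
      = if j = i then 1 else 0 := by
    intro j
    simp [EuclideanSpace.single_apply]
  simp only [this, smul_eq_mul, mul_ite, mul_one, mul_zero]
  rw [Finset.sum_ite_eq' A i (fun j => 2 * y j)]
  split_ifs <;> ring

/-- derivative of `u^p * v^q` where `u`, `v` are the full and partial sums of squares -/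
noncomputable def phid {k : ℕ} (T : Finset (Fin k)) (p q : ℝ) (y : EuclideanSpace ℝ (Fin k)) :
    EuclideanSpace ℝ (Fin k) →L[ℝ] ℝ :=
  ((∑ j : Fin k, y j ^ 2) ^ p) • ((q * (∑ j ∈ T, y j ^ 2) ^ (q - 1)) • qd T y)
    + ((∑ j ∈ T, y j ^ 2) ^ q) • ((p * (∑ j : Fin k, y j ^ 2) ^ (p - 1)) • qd univ y)

lemma hasFDeriv_phi {k : ℕ} (T : Finset (Fin k)) (p q : ℝ) (y : EuclideanSpace ℝ (Fin k))
    (hu : (∑ j : Fin k, y j ^ 2) ≠ 0) (hv : (∑ j ∈ T, y j ^ 2) ≠ 0) :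
    HasFDerivAt (fun z : EuclideanSpace ℝ (Fin k) =>
      (∑ j : Fin k, z j ^ 2) ^ p * (∑ j ∈ T, z j ^ 2) ^ q) (phid T p q y) y := by
  have h1 := (hasFDeriv_qf univ y).rpow_const (p := p) (Or.inl (by simpa using hu))
  have h2 := (hasFDeriv_qf T y).rpow_const (p := q) (Or.inl hv)
  have := h1.mul h2
  exact this

lemma phid_apply {k : ℕ} (T : Finset (Fin k)) (p q : ℝ) (y : EuclideanSpace ℝ (Fin k))
    (i : Fin k) :
    phid T p q y (EuclideanSpace.single i 1)
      = (2*p) * y i * ((∑ j : Fin k, y j ^ 2) ^ (p-1) * (∑ j ∈ T, y j ^ 2) ^ q)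
        + (if i ∈ T then (1:ℝ) else 0) * ((2*q) * y i
            * ((∑ j : Fin k, y j ^ 2) ^ p * (∑ j ∈ T, y j ^ 2) ^ (q-1))) := by
  simp only [phid, ContinuousLinearMap.add_apply, ContinuousLinearMap.smul_apply, qd_apply,
    smul_eq_mul, Finset.mem_univ, if_true]
  split_ifs <;> ring

/-- Identify `ℂ^m` with `ℝ^{2m}`, and let `ℂ^{m-n}` (with `n > 0`) be the
coordinate subspace `K` (real codimension `2n`). With `r x = |x|` and
`s x = dist(x, K)`, for all real `β, γ`, on `ℂ^m \ K` one has
`Δ(r^β s^γ) = -½ r^{β-2} s^{γ-2} [γ(γ+2n-2) r² + β(2m-2+β+2γ) s²]`. -/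
theorem stmt9 (m n : ℕ) (hn : 0 < n) (hmn : n ≤ m) (β γ : ℝ)
    (K : Set (EuclideanSpace ℝ (Fin (2 * m))))
    (hK : K = {x | ∀ i : Fin (2 * m), 2 * (m - n) ≤ (i : ℕ) → x i = 0})
    (r s : EuclideanSpace ℝ (Fin (2 * m)) → ℝ)
    (hr : ∀ x, r x = ‖x‖) (hs : ∀ x, s x = Metric.infDist x K)
    (x : EuclideanSpace ℝ (Fin (2 * m))) (hx : x ∉ K) :
    kahlerLaplacian (fun y => r y ^ β * s y ^ γ) x
      = -(1/2) * r x ^ (β - 2) * s x ^ (γ - 2) *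
          (γ * (γ + 2 * n - 2) * r x ^ 2 + β * (2 * m - 2 + β + 2 * γ) * s x ^ 2) := by
  set T : Finset (Fin (2*m)) :=
    Finset.univ.filter (fun i : Fin (2*m) => 2*(m-n) ≤ (i:ℕ)) with hT
  have hsnorm : ∀ y, s y = Real.sqrt (∑ j ∈ T, y j ^ 2) := by
    intro y; rw [hs, hK, infdist_formula m n y]
  have hrnorm : ∀ y, r y = Real.sqrt (∑ j : Fin (2*m), y j ^ 2) := by
    intro y; rw [hr, EuclideanSpace.norm_eq]
    congr 1
    exact Finset.sum_congr rfl fun j _ => by rw [Real.norm_eq_abs, sq_abs]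
  have husum : ∀ y : EuclideanSpace ℝ (Fin (2*m)), 0 ≤ ∑ j : Fin (2*m), y j ^ 2 :=
    fun y => Finset.sum_nonneg fun j _ => sq_nonneg _
  have hvsum : ∀ y : EuclideanSpace ℝ (Fin (2*m)), 0 ≤ ∑ j ∈ T, y j ^ 2 :=
    fun y => Finset.sum_nonneg fun j _ => sq_nonneg _
  have hsqrt : ∀ (t a : ℝ), 0 ≤ t → Real.sqrt t ^ a = t ^ (a/2) := by
    intro t a ht
    rw [show a/2 = (1/2)*a by ring, Real.rpow_mul ht, Real.sqrt_eq_rpow]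
  have hf : (fun y => r y ^ β * s y ^ γ)
      = fun z : EuclideanSpace ℝ (Fin (2*m)) =>
          (∑ j : Fin (2*m), z j ^ 2) ^ (β/2) * (∑ j ∈ T, z j ^ 2) ^ (γ/2) := by
    funext y
    rw [hrnorm, hsnorm, hsqrt _ _ (husum y), hsqrt _ _ (hvsum y)]
  have hvx : 0 < ∑ j ∈ T, x j ^ 2 := by
    rw [hK] at hx
    simp only [Set.mem_setOf_eq, not_forall] at hx
    obtain ⟨i, hi, hxi⟩ := hx
    refine Finset.sum_pos' (fun j _ => sq_nonneg _) ⟨i, ?_, by positivity⟩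
    simp [hT, hi]
  have hle : ∀ y : EuclideanSpace ℝ (Fin (2*m)),
      (∑ j ∈ T, y j ^ 2) ≤ ∑ j : Fin (2*m), y j ^ 2 := fun y =>
    Finset.sum_le_sum_of_subset_of_nonneg (Finset.filter_subset _ _) fun j _ _ => sq_nonneg _
  have hux : 0 < ∑ j : Fin (2*m), x j ^ 2 := lt_of_lt_of_le hvx (hle x)
  have hUopen : IsOpen {y : EuclideanSpace ℝ (Fin (2*m)) | 0 < ∑ j ∈ T, y j ^ 2} := by
    have hc : Continuous (fun y : EuclideanSpace ℝ (Fin (2*m)) => ∑ j ∈ T, y j ^ 2) :=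
      continuous_finset_sum T fun j _ => ((EuclideanSpace.proj (𝕜 := ℝ) j).continuous.pow 2)
    exact isOpen_lt continuous_const hc
  have hterm : ∀ i : Fin (2*m),
      fderiv ℝ (fun y => fderiv ℝ (fun z : EuclideanSpace ℝ (Fin (2*m)) =>
          (∑ j : Fin (2*m), z j ^ 2) ^ (β/2) * (∑ j ∈ T, z j ^ 2) ^ (γ/2)) y
        (EuclideanSpace.single i 1)) x (EuclideanSpace.single i 1)
      = (β*(β-2)*((∑ j : Fin (2*m), x j ^ 2)^(β/2-2) * (∑ j ∈ T, x j ^ 2)^(γ/2))) * (x i ^ 2)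
        + (2*β*γ*((∑ j : Fin (2*m), x j ^ 2)^(β/2-1) * (∑ j ∈ T, x j ^ 2)^(γ/2-1))
            + γ*(γ-2)*((∑ j : Fin (2*m), x j ^ 2)^(β/2) * (∑ j ∈ T, x j ^ 2)^(γ/2-2)))
            * ((if i ∈ T then (1:ℝ) else 0) * x i ^ 2)
        + β*((∑ j : Fin (2*m), x j ^ 2)^(β/2-1) * (∑ j ∈ T, x j ^ 2)^(γ/2))
        + (γ*((∑ j : Fin (2*m), x j ^ 2)^(β/2) * (∑ j ∈ T, x j ^ 2)^(γ/2-1)))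
            * (if i ∈ T then (1:ℝ) else 0) := by
    intro i
    have heq : (fun y => fderiv ℝ (fun z : EuclideanSpace ℝ (Fin (2*m)) =>
          (∑ j : Fin (2*m), z j ^ 2) ^ (β/2) * (∑ j ∈ T, z j ^ 2) ^ (γ/2)) y
            (EuclideanSpace.single i 1))
        =ᶠ[nhds x] (fun y : EuclideanSpace ℝ (Fin (2*m)) =>
          (2*(β/2)) * y i * ((∑ j : Fin (2*m), y j ^ 2) ^ (β/2-1) * (∑ j ∈ T, y j ^ 2) ^ (γ/2))
            + (if i ∈ T then (1:ℝ) else 0) * ((2*(γ/2)) * y i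
                * ((∑ j : Fin (2*m), y j ^ 2) ^ (β/2) * (∑ j ∈ T, y j ^ 2) ^ (γ/2-1)))) := by
      refine Filter.eventuallyEq_of_mem (hUopen.mem_nhds hvx) fun y hy => ?_
      have hvy : 0 < ∑ j ∈ T, y j ^ 2 := hy
      have huy : 0 < ∑ j : Fin (2*m), y j ^ 2 := lt_of_lt_of_le hvy (hle y)
      rw [(hasFDeriv_phi T (β/2) (γ/2) y huy.ne' hvy.ne').fderiv, phid_apply]
    rw [heq.fderiv_eq]
    have hproj : HasFDerivAt (fun y : EuclideanSpace ℝ (Fin (2*m)) => y i)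
        (EuclideanSpace.proj (𝕜 := ℝ) i) x := (EuclideanSpace.proj (𝕜 := ℝ) i).hasFDerivAt
    have w1 := hasFDeriv_phi T (β/2-1) (γ/2) x hux.ne' hvx.ne'
    have w2 := hasFDeriv_phi T (β/2) (γ/2-1) x hux.ne' hvx.ne'
    have hGi : HasFDerivAt (fun y : EuclideanSpace ℝ (Fin (2*m)) =>
          (2*(β/2)) * y i * ((∑ j : Fin (2*m), y j ^ 2) ^ (β/2-1) * (∑ j ∈ T, y j ^ 2) ^ (γ/2))
            + (if i ∈ T then (1:ℝ) else 0) * ((2*(γ/2)) * y i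
                * ((∑ j : Fin (2*m), y j ^ 2) ^ (β/2) * (∑ j ∈ T, y j ^ 2) ^ (γ/2-1))))
        ((((2*(β/2)) * x i) • phid T (β/2-1) (γ/2) x
            + ((∑ j : Fin (2*m), x j ^ 2) ^ (β/2-1) * (∑ j ∈ T, x j ^ 2) ^ (γ/2))
                • ((2*(β/2)) • EuclideanSpace.proj (𝕜 := ℝ) i))
          + (if i ∈ T then (1:ℝ) else 0) • (((2*(γ/2)) * x i) • phid T (β/2) (γ/2-1) x
            + ((∑ j : Fin (2*m), x j ^ 2) ^ (β/2) * (∑ j ∈ T, x j ^ 2) ^ (γ/2-1))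
                • ((2*(γ/2)) • EuclideanSpace.proj (𝕜 := ℝ) i))) x :=
      ((hproj.const_mul _).mul w1).add (((hproj.const_mul _).mul w2).const_mul _)
    rw [hGi.fderiv]
    have hps : (EuclideanSpace.proj (𝕜 := ℝ) i) (EuclideanSpace.single i (1:ℝ)) = 1 := by
      simp [EuclideanSpace.single_apply]
    simp only [ContinuousLinearMap.add_apply, ContinuousLinearMap.smul_apply, phid_apply,
      hps, smul_eq_mul]
    rw [show β/2-1-1 = β/2-2 by ring, show γ/2-1-1 = γ/2-2 by ring]
    split_ifs <;> ring
  rw [hf]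
  simp only [kahlerLaplacian]
  rw [Finset.sum_congr rfl (fun i _ => hterm i)]
  -- now compute the sum
  have hsum1 : ∑ i : Fin (2*m), (if i ∈ T then (1:ℝ) else 0) * x i ^ 2
      = ∑ j ∈ T, x j ^ 2 := by
    simp [ite_mul]
  have hsum2 : ∑ i : Fin (2*m), (if i ∈ T then (1:ℝ) else 0) = 2*n := by
    have : ∀ i : Fin (2*m), (if i ∈ T then (1:ℝ) else 0)
        = if 2*(m-n) ≤ (i:ℕ) then (1:ℝ) else 0 := by
      intro i; simp [hT]
    rw [Finset.sum_congr rfl fun i _ => this i]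
    rw [Fin.sum_univ_eq_sum_range (fun j => if 2*(m-n) ≤ j then (1:ℝ) else 0) (2*m)]
    rw [Finset.sum_boole]
    have h1 : (Finset.range (2*m)).filter (fun j => 2*(m-n) ≤ j)
        = Finset.Ico (2*(m-n)) (2*m) := by
      ext j; simp [Finset.mem_Ico, and_comm]
    rw [h1, Nat.card_Ico, show 2*m - 2*(m-n) = 2*n by omega]
    push_cast; ring
  simp only [Finset.sum_add_distrib, hsum1, ← Finset.mul_sum, hsum2, Finset.sum_const,
    Finset.card_univ, Fintype.card_fin, nsmul_eq_mul]
  rw [hrnorm x, hsnorm x]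
  rw [hsqrt _ (β-2) (husum x), hsqrt _ (γ-2) (hvsum x),
    Real.sq_sqrt (husum x), Real.sq_sqrt (hvsum x),
    show (β-2)/2 = β/2-1 by ring, show (γ-2)/2 = γ/2-1 by ring]
  have eU0 : (∑ j : Fin (2*m), x j ^ 2) ^ (β/2 : ℝ)
      = (∑ j : Fin (2*m), x j ^ 2)^(β/2-2 : ℝ) * (∑ j : Fin (2*m), x j ^ 2)
        * (∑ j : Fin (2*m), x j ^ 2) := by
    conv_lhs => rw [show (β/2 : ℝ) = (β/2-2) + 1 + 1 by ring]
    rw [Real.rpow_add_one hux.ne', Real.rpow_add_one hux.ne']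
  have eU1 : (∑ j : Fin (2*m), x j ^ 2) ^ (β/2 - 1 : ℝ)
      = (∑ j : Fin (2*m), x j ^ 2)^(β/2-2 : ℝ) * (∑ j : Fin (2*m), x j ^ 2) := by
    conv_lhs => rw [show (β/2 - 1 : ℝ) = (β/2-2) + 1 by ring]
    rw [Real.rpow_add_one hux.ne']
  have eV0 : (∑ j ∈ T, x j ^ 2) ^ (γ/2 : ℝ)
      = (∑ j ∈ T, x j ^ 2)^(γ/2-2 : ℝ) * (∑ j ∈ T, x j ^ 2) * (∑ j ∈ T, x j ^ 2) := by
    conv_lhs => rw [show (γ/2 : ℝ) = (γ/2-2) + 1 + 1 by ring]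
    rw [Real.rpow_add_one hvx.ne', Real.rpow_add_one hvx.ne']
  have eV1 : (∑ j ∈ T, x j ^ 2) ^ (γ/2 - 1 : ℝ)
      = (∑ j ∈ T, x j ^ 2)^(γ/2-2 : ℝ) * (∑ j ∈ T, x j ^ 2) := by
    conv_lhs => rw [show (γ/2 - 1 : ℝ) = (γ/2-2) + 1 by ring]
    rw [Real.rpow_add_one hvx.ne']
  rw [eU0, eU1, eV0, eV1]
  push_cast
  ring
end

section
/- Let m ≥ n ≥ 1 and 0 ≤ s ≤ r be real variables. With β, γ ∈ ℝ, there exists C > 0 such that for all 0 < s ≤ r, C·(-½) r^{β-2} s^{γ-2}[γ(γ+2n-2) r² + β(2m-2+β+2γ) s²] ≥ r^β s^{γ-2} if and only if γ(γ+2n-2) < 0 and γ(γ+2n-2) + β(2m-2+β+2γ) < 0. -/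
lemma stmt10_key (A B : ℝ) :
    (∃ C : ℝ, 0 < C ∧ ∀ t : ℝ, 0 < t → t ≤ 1 → C * (A + B * t ^ 2) ≤ -2) ↔
    (A < 0 ∧ A + B < 0) := by
  constructor
  · rintro ⟨C, hC, h⟩
    have h1 := h 1 one_pos le_rfl
    constructor
    · by_contra hA
      push_neg at hA
      rcases le_or_gt 0 B with hB | hB
      · nlinarith
      · set e := 1 / (C * (-B)) with he
        have hCB : 0 < C * (-B) := mul_pos hC (neg_pos.mpr hB)
        have hep : 0 < e := by rw [he]; positivity
        set t := min 1 (Real.sqrt e) with ht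
        have htp : 0 < t := lt_min one_pos (Real.sqrt_pos.mpr hep)
        have ht1 : t ≤ 1 := min_le_left _ _
        have hts : t ≤ Real.sqrt e := min_le_right _ _
        have ht2 : t ^ 2 ≤ e := by
          calc t ^ 2 ≤ Real.sqrt e ^ 2 := pow_le_pow_left₀ htp.le hts 2
            _ = e := Real.sq_sqrt hep.le
        have := h t htp ht1
        have hBe : C * (-B) * e = 1 := by
          rw [he, mul_one_div, div_self hCB.ne']
        nlinarith [sq_nonneg t, mul_pos hC (neg_pos.mpr hB)]
    · nlinarith
  · rintro ⟨hA, hAB⟩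
    set M := max A (A + B) with hM
    have hMneg : M < 0 := max_lt hA hAB
    refine ⟨-2 / M, div_pos_of_neg_of_neg (by norm_num) hMneg, fun t htp ht1 => ?_⟩
    have hle : A + B * t ^ 2 ≤ M := by
      rcases le_or_gt 0 B with hB | hB
      · have ht2 : t ^ 2 ≤ 1 := by nlinarith
        have : B * t ^ 2 ≤ B := by nlinarith
        calc A + B * t ^ 2 ≤ A + B := by linarith
          _ ≤ M := le_max_right _ _
      · have : B * t ^ 2 ≤ 0 := by nlinarith
        calc A + B * t ^ 2 ≤ A := by linarith
          _ ≤ M := le_max_left _ _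
    have hCpos : 0 < -2 / M := by
      apply div_pos_of_neg_of_neg <;> linarith
    have : -2 / M * M = -2 := div_mul_cancel₀ _ hMneg.ne
    nlinarith

/-- For real variables `0 < s ≤ r`, integers `m ≥ n ≥ 1`, and
`β, γ ∈ ℝ`, there exists a constant `C > 0` with
`C · (-½) r^{β-2} s^{γ-2}[γ(γ+2n-2) r² + β(2m-2+β+2γ) s²] ≥ r^β s^{γ-2}`
for all `0 < s ≤ r` if and only if `γ(γ+2n-2) < 0` and
`γ(γ+2n-2) + β(2m-2+β+2γ) < 0`. -/
theorem stmt10 (m n : ℕ) (hn : 1 ≤ n) (hmn : n ≤ m) (β γ : ℝ) :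
    (∃ C : ℝ, 0 < C ∧ ∀ r s : ℝ, 0 < s → s ≤ r →
      C * (-(1/2) * r ^ (β - 2) * s ^ (γ - 2) *
        (γ * (γ + 2 * n - 2) * r ^ 2 + β * (2 * m - 2 + β + 2 * γ) * s ^ 2))
      ≥ r ^ β * s ^ (γ - 2)) ↔
    (γ * (γ + 2 * n - 2) < 0 ∧
      γ * (γ + 2 * n - 2) + β * (2 * m - 2 + β + 2 * γ) < 0) := by
  set A := γ * (γ + 2 * n - 2) with hA
  set B := β * (2 * m - 2 + β + 2 * γ) with hB
  rw [← stmt10_key A B]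
  constructor
  · rintro ⟨C, hC, h⟩
    refine ⟨C, hC, fun t htp ht1 => ?_⟩
    have h1 := h 1 t htp ht1
    simp only [Real.one_rpow, one_pow, one_mul, mul_one] at h1
    have hP : (0:ℝ) < t ^ (γ - 2) := Real.rpow_pos_of_pos htp _
    nlinarith [mul_pos hP hC]
  · rintro ⟨C, hC, h⟩
    refine ⟨C, hC, fun r s hs hsr => ?_⟩
    have hr : 0 < r := hs.trans_le hsr
    set t := s / r with htd
    have htp : 0 < t := div_pos hs hr
    have ht1 : t ≤ 1 := (div_le_one hr).mpr hsr
    have hCt := h t htp ht1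
    have hs2 : s ^ 2 = t ^ 2 * r ^ 2 := by
      rw [htd, div_pow, div_mul_cancel₀ _ (pow_ne_zero 2 hr.ne')]
    have hrb : r ^ β = r ^ (β - 2) * r ^ (2:ℕ) := by
      rw [← Real.rpow_natCast r 2, ← Real.rpow_add hr]
      norm_num
    have hP : (0:ℝ) < r ^ (β - 2) * r ^ (2:ℕ) * s ^ (γ - 2) := by
      have := Real.rpow_pos_of_pos hr (β - 2)
      have := Real.rpow_pos_of_pos hs (γ - 2)
      positivity
    rw [ge_iff_le, hrb, hs2]
    nlinarith [mul_le_mul_of_nonneg_left hCt hP.le]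
end
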